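/- Let K be the field ℝ or ℂ, (V, B) a finite-dimensional symplectic vector space over K, and P : V → V a linear operator self-adjoint with respect to B. Let p_1, …, p_r be the distinct monic irreducible factors of the characteristic polynomial of P, and set V^{(i)} = Ker p_i(P)^{dim V} (the generalized eigenspace associated to p_i), so that V = ⊕_{i=1}^r V^{(i)}. Then a subspace W ⊆ V is invariant under Aut(V, B, P) if and only if W = ⊕_{i=1}^r (W ∩ V^{(i)}) and, for each i, the intersection W ∩ V^{(i)} is invariant under Aut(V^{(i)}, B|_{V^{(i)}}, P|_{V^{(i)}}). -/

import Mathlib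

open Polynomial

/-- A submodule `W` is invariant under `Aut(V, B, P)`, the group of linear automorphisms
preserving the bilinear form `B` and commuting with the operator `P`. -/
def IsInvariantSubmodule {K V : Type*} [Field K] [AddCommGroup V] [Module K V]
    (B : LinearMap.BilinForm K V) (P : Module.End K V) (W : Submodule K V) : Prop :=
  ∀ g : V ≃ₗ[K] V, (∀ u v : V, B (g u) (g v) = B u v) → (∀ v : V, g (P v) = P (g v)) →
    W.map (g : V →ₗ[K] V) = W

/-- Auxiliary: a monic polynomial all of whose monic irreducible factors lie among `p i`
divides `∏ i, (p i) ^ N` whenever its degree is at most `N`. -/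
theorem aux_dvd_prod_pow {K : Type*} [Field K] {r : ℕ} (p : Fin r → K[X])
    (N : ℕ) : ∀ (f : K[X]), f.Monic → f.natDegree ≤ N →
    (∀ q : K[X], q.Monic → Irreducible q → q ∣ f → ∃ i, q = p i) →
    f ∣ ∏ i, (p i) ^ N := by
  induction N with
  | zero =>
    intro f hf hdeg _
    have : f = 1 := hf.natDegree_eq_zero.mp (Nat.le_zero.mp hdeg)
    simp [this]
  | succ N IH =>
    intro f hf hdeg hfac
    by_cases hu : IsUnit f
    · have : f = 1 := hf.natDegree_eq_zero.mp
        (Polynomial.natDegree_eq_zero_of_isUnit hu)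
      simp [this]
    · obtain ⟨q, hqm, hqi, hqd⟩ := f.exists_monic_irreducible_factor hu
      obtain ⟨i, rfl⟩ := hfac q hqm hqi hqd
      obtain ⟨f', rfl⟩ := hqd
      have hf'm : f'.Monic := hqm.of_mul_monic_left hf
      have hdeg' : f'.natDegree ≤ N := by
        have h1 : (p i).natDegree + f'.natDegree ≤ N + 1 := by
          rwa [← Polynomial.natDegree_mul hqm.ne_zero hf'm.ne_zero]
        have h2 : 1 ≤ (p i).natDegree := hqi.natDegree_pos
        omega
      have hdvd' : f' ∣ ∏ j, (p j) ^ N :=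
        IH f' hf'm hdeg' (fun q hq1 hq2 hq3 => hfac q hq1 hq2 (hq3.mul_left _))
      calc p i * f' ∣ p i * ∏ j, (p j) ^ N := mul_dvd_mul_left _ hdvd'
        _ ∣ (∏ j, p j) * ∏ j, (p j) ^ N :=
            mul_dvd_mul_right (Finset.dvd_prod_of_mem p (Finset.mem_univ i)) _
        _ = ∏ j, (p j) ^ (N + 1) := by
            rw [← Finset.prod_mul_distrib]
            exact Finset.prod_congr rfl fun j _ => (pow_succ' (p j) N).symm

/-- Powers of a self-adjoint operator are self-adjoint. -/
theorem aux_pow_selfadj {K V : Type*} [Field K] [AddCommGroup V] [Module K V]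
    (B : LinearMap.BilinForm K V) (P : Module.End K V)
    (hP : ∀ u v : V, B (P u) v = B u (P v)) (k : ℕ) :
    ∀ u v : V, B ((P ^ k) u) v = B u ((P ^ k) v) := by
  induction k with
  | zero => simp
  | succ k IH =>
    intro u v
    conv_lhs => rw [pow_succ]
    conv_rhs => rw [pow_succ']
    simp only [Module.End.mul_apply]
    rw [IH, hP]

/-- Polynomials in a self-adjoint operator are self-adjoint. -/
theorem aux_aeval_selfadj {K V : Type*} [Field K] [AddCommGroup V] [Module K V]
    (B : LinearMap.BilinForm K V) (P : Module.End K V)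
    (hP : ∀ u v : V, B (P u) v = B u (P v)) (q : K[X]) :
    ∀ u v : V, B ((Polynomial.aeval P q) u) v = B u ((Polynomial.aeval P q) v) := by
  induction q using Polynomial.induction_on' with
  | add f g hf hg =>
    intro u v
    simp only [map_add, LinearMap.add_apply, LinearMap.map_add]
    rw [hf, hg]
  | monomial k a =>
    intro u v
    simp only [Polynomial.aeval_monomial]
    have halg : (algebraMap K (Module.End K V)) a = a • (1 : Module.End K V) := by
      simp [Algebra.algebraMap_eq_smul_one]
    simp only [halg, smul_mul_assoc, one_mul, LinearMap.smul_apply, Module.End.mul_apply]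
    rw [LinearMap.map_smul₂, LinearMap.map_smul, aux_pow_selfadj B P hP k]

/-- A linear equivalence commuting with `P` commutes with polynomials in `P`. -/
theorem aux_aeval_comm {K V : Type*} [Field K] [AddCommGroup V] [Module K V]
    (P : Module.End K V) (g : V ≃ₗ[K] V) (hg : ∀ v : V, g (P v) = P (g v)) (q : K[X]) :
    ∀ v : V, g ((Polynomial.aeval P q) v) = (Polynomial.aeval P q) (g v) := by
  have hpow : ∀ (k : ℕ) (v : V), g ((P ^ k) v) = (P ^ k) (g v) := by
    intro k
    induction k with
    | zero => simp
    | succ k IH =>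
      intro v
      conv_lhs => rw [pow_succ']
      conv_rhs => rw [pow_succ']
      simp only [Module.End.mul_apply]
      rw [hg, IH]
  induction q using Polynomial.induction_on' with
  | add f h hf hh =>
    intro v
    simp only [map_add, LinearMap.add_apply, LinearEquiv.map_add, hf, hh]
  | monomial k a =>
    intro v
    simp only [Polynomial.aeval_monomial]
    have halg : (algebraMap K (Module.End K V)) a = a • (1 : Module.End K V) := by
      simp [Algebra.algebraMap_eq_smul_one]
    simp only [halg, smul_mul_assoc, one_mul, LinearMap.smul_apply, Module.End.mul_apply]
    rw [LinearEquiv.map_smul, hpow]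

/-- **Decomposition of invariant subspaces over generalized eigenspaces.**
Let `K = ℝ` or `ℂ`, `(V, B)` a finite-dimensional symplectic space over `K`, `P` a
`B`-self-adjoint operator, `p 1, …, p r` the distinct monic irreducible factors of the
characteristic polynomial of `P`, and `V⁽ⁱ⁾ = Ker (pᵢ(P) ^ dim V)` the associated
generalized eigenspaces. A subspace `W` is invariant under `Aut(V, B, P)` iff it is the
(direct) sum of its intersections with the `V⁽ⁱ⁾` and each intersection `W ∩ V⁽ⁱ⁾` is
invariant under `Aut(V⁽ⁱ⁾, B|, P|)`. -/
theorem invariant_iff_sum_of_generalized_eigenspace_intersections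
    (K V : Type*) [RCLike K] [AddCommGroup V] [Module K V] [FiniteDimensional K V]
    (B : LinearMap.BilinForm K V) (hBalt : B.IsAlt)
    (hBnd : ∀ u : V, (∀ v : V, B u v = 0) → u = 0)
    (P : Module.End K V) (hP : ∀ u v : V, B (P u) v = B u (P v))
    {r : ℕ} (p : Fin r → Polynomial K)
    (hmonic : ∀ i, (p i).Monic) (hirr : ∀ i, Irreducible (p i))
    (hinj : Function.Injective p)
    (hfac : ∀ q : Polynomial K, q.Monic → Irreducible q →
      (q ∣ LinearMap.charpoly P ↔ ∃ i, q = p i))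
    (Vg : Fin r → Submodule K V)
    (hVg : ∀ i, Vg i
      = LinearMap.ker ((Polynomial.aeval P (p i)) ^ Module.finrank K V))
    (hPVg : ∀ i, ∀ x ∈ Vg i, P x ∈ Vg i)
    (W : Submodule K V) :
    IsInvariantSubmodule B P W ↔
      (W = ⨆ i, W ⊓ Vg i) ∧
      ∀ i, IsInvariantSubmodule (B.domRestrict₁₂ (Vg i) (Vg i))
        (P.restrict (hPVg i)) ((W ⊓ Vg i).comap (Vg i).subtype) := by
  classical
  set n := Module.finrank K V with hn
  set Q : Fin r → Polynomial K := fun i => (p i) ^ n with hQdef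
  have hVgmem : ∀ i (x : V), x ∈ Vg i ↔ (Polynomial.aeval P (Q i)) x = 0 := by
    intro i x
    rw [hVg i, hQdef]
    simp only [map_pow]
    exact Iff.rfl
  -- pairwise coprimality
  have hpcop : ∀ i j, i ≠ j → IsCoprime (p i) (p j) := by
    intro i j hij
    refine (hirr i).coprime_iff_not_dvd.mpr (fun hdvd => hij ?_)
    exact hinj (Polynomial.eq_of_monic_of_associated (hmonic i) (hmonic j)
      ((hirr i).associated_of_dvd (hirr j) hdvd))
  have hQcop : ∀ i j, i ≠ j → IsCoprime (Q i) (Q j) := fun i j hij => (hpcop i j hij).pow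
  -- orthogonality of distinct generalized eigenspaces
  have horth : ∀ i j, i ≠ j → ∀ u ∈ Vg i, ∀ v ∈ Vg j, B u v = 0 := by
    intro i j hij u hu v hv
    obtain ⟨a, b, hab⟩ := hQcop i j hij
    have h0 : (Polynomial.aeval P (a * Q i + b * Q j)) u = u := by rw [hab]; simp
    have h1 : u = (Polynomial.aeval P (b * Q j)) u := by
      conv_lhs => rw [← h0]
      simp only [map_add, map_mul, LinearMap.add_apply, Module.End.mul_apply]
      rw [(hVgmem i u).mp hu]
      simp
    rw [h1, aux_aeval_selfadj B P hP]
    rw [map_mul, Module.End.mul_apply, (hVgmem j v).mp hv]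
    simp
  -- the product of all Q i annihilates V
  have hannih : Polynomial.aeval P (∏ i, Q i) = 0 := by
    have hdvd : LinearMap.charpoly P ∣ ∏ i, Q i := by
      apply aux_dvd_prod_pow p n (LinearMap.charpoly P) (LinearMap.charpoly_monic P)
        (le_of_eq (LinearMap.charpoly_natDegree P))
      intro q hq1 hq2 hq3
      exact (hfac q hq1 hq2).mp hq3
    obtain ⟨c, hc⟩ := hdvd
    rw [hc, map_mul, LinearMap.aeval_self_charpoly, zero_mul]
  -- partial sups are contained in kernels of partial products
  have hsupker : ∀ s : Finset (Fin r),
      (⨆ j ∈ s, Vg j) ≤ LinearMap.ker (Polynomial.aeval P (∏ j ∈ s, Q j)) := by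
    intro s
    refine iSup₂_le fun j hj => fun x hx => ?_
    rw [LinearMap.mem_ker, ← Finset.prod_erase_mul s Q hj, map_mul, Module.End.mul_apply,
      (hVgmem j x).mp hx, map_zero]
  -- kernels of partial products are contained in partial sups
  have hcover : ∀ s : Finset (Fin r),
      LinearMap.ker (Polynomial.aeval P (∏ j ∈ s, Q j)) ≤ ⨆ j ∈ s, Vg j := by
    intro s
    induction s using Finset.induction_on with
    | empty =>
      intro x hx
      rw [LinearMap.mem_ker, Finset.prod_empty, map_one, Module.End.one_apply] at hx
      rw [hx]
      exact zero_mem _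
    | @insert i s his IH =>
      intro x hx
      rw [LinearMap.mem_ker] at hx
      obtain ⟨a, b, hab⟩ : IsCoprime (Q i) (∏ j ∈ s, Q j) :=
        IsCoprime.prod_right fun j hj => hQcop i j (fun h => his (h ▸ hj))
      have hx1 : x = (Polynomial.aeval P (a * Q i)) x
          + (Polynomial.aeval P (b * ∏ j ∈ s, Q j)) x := by
        have h0 : (Polynomial.aeval P (a * Q i + b * ∏ j ∈ s, Q j)) x = x := by
          rw [hab]; simp
        conv_lhs => rw [← h0]
        rw [map_add, LinearMap.add_apply]
      have hmono : (⨆ j ∈ s, Vg j) ≤ ⨆ j ∈ insert i s, Vg j :=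
        iSup₂_le fun j hj => le_iSup₂ (f := fun j _ => Vg j) j (Finset.mem_insert_of_mem hj)
      have hmem1 : (Polynomial.aeval P (a * Q i)) x ∈ ⨆ j ∈ insert i s, Vg j := by
        apply hmono
        apply IH
        rw [LinearMap.mem_ker, ← Module.End.mul_apply, ← map_mul]
        have he : (∏ j ∈ s, Q j) * (a * Q i) = a * ((Q i) * ∏ j ∈ s, Q j) := by ring
        rw [he, ← Finset.prod_insert his, map_mul, Module.End.mul_apply, hx, map_zero]
      have hmem2 : (Polynomial.aeval P (b * ∏ j ∈ s, Q j)) x ∈ ⨆ j ∈ insert i s, Vg j := by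
        apply le_iSup₂ (f := fun j _ => Vg j) i (Finset.mem_insert_self i s)
        rw [hVgmem]
        rw [← Module.End.mul_apply, ← map_mul]
        have he : (Q i) * (b * ∏ j ∈ s, Q j) = b * ((Q i) * ∏ j ∈ s, Q j) := by ring
        rw [he, ← Finset.prod_insert his, map_mul, Module.End.mul_apply, hx, map_zero]
      rw [hx1]
      exact add_mem hmem1 hmem2
  have htopbi : (⊤ : Submodule K V) ≤ ⨆ j ∈ Finset.univ, Vg j := by
    refine le_trans ?_ (hcover Finset.univ)
    intro x _
    rw [LinearMap.mem_ker, hannih, LinearMap.zero_apply]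
  -- complements
  set U' : Fin r → Submodule K V := fun i => ⨆ j ∈ Finset.univ.erase i, Vg j with hU'def
  have hU'le : ∀ i j, j ≠ i → Vg j ≤ U' i := fun i j hj =>
    le_iSup₂ (f := fun j _ => Vg j) j (Finset.mem_erase.mpr ⟨hj, Finset.mem_univ j⟩)
  have hcompl : ∀ i, IsCompl (Vg i) (U' i) := by
    intro i
    constructor
    · rw [disjoint_iff, eq_bot_iff]
      intro x hx
      obtain ⟨hx1, hx2⟩ := Submodule.mem_inf.mp hx
      obtain ⟨a, b, hab⟩ : IsCoprime (Q i) (∏ j ∈ Finset.univ.erase i, Q j) :=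
        IsCoprime.prod_right fun j hj => hQcop i j (Ne.symm (Finset.mem_erase.mp hj).1)
      have h0 : (Polynomial.aeval P (a * Q i + b * ∏ j ∈ Finset.univ.erase i, Q j)) x = x := by
        rw [hab]; simp
      have hxz : x = 0 := by
        rw [← h0, map_add, LinearMap.add_apply, map_mul, map_mul, Module.End.mul_apply,
          Module.End.mul_apply, (hVgmem i x).mp hx1,
          LinearMap.mem_ker.mp (hsupker (Finset.univ.erase i) hx2)]
        simp
      simpa using hxz
    · rw [codisjoint_iff, eq_top_iff]
      refine le_trans htopbi (iSup₂_le fun j _ => ?_)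
      by_cases h : j = i
      · subst h; exact le_sup_left
      · exact le_trans (hU'le i j h) le_sup_right
  have hU'P : ∀ i, ∀ y ∈ U' i, P y ∈ U' i := by
    intro i
    have h1 : U' i ≤ Submodule.comap P (U' i) :=
      iSup₂_le fun j hj => fun y hy =>
        Submodule.mem_comap.mpr (hU'le i j (Finset.mem_erase.mp hj).1 (hPVg j y hy))
    exact fun y hy => h1 hy
  have hU'orth : ∀ i, ∀ u ∈ Vg i, ∀ y ∈ U' i, B u y = 0 := by
    intro i u hu
    have h1 : U' i ≤ LinearMap.ker (B u) :=
      iSup₂_le fun j hj => fun y hy =>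
        LinearMap.mem_ker.mpr (horth i j (Ne.symm (Finset.mem_erase.mp hj).1) u hu y hy)
    exact fun y hy => h1 hy
  have hU'orth' : ∀ i, ∀ u ∈ Vg i, ∀ y ∈ U' i, B y u = 0 := by
    intro i u hu
    have h1 : U' i ≤ LinearMap.ker (B.flip u) :=
      iSup₂_le fun j hj => fun y hy =>
        LinearMap.mem_ker.mpr (horth j i (Finset.mem_erase.mp hj).1 y hy u hu)
    intro y hy
    exact h1 hy
  -- decomposition of vectors
  have hdecomp : ∀ (i : Fin r) (v : V), ∃ (x : Vg i) (y : U' i), v = ↑x + ↑y := by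
    intro i v
    have hv : v ∈ Vg i ⊔ U' i := by
      rw [(hcompl i).codisjoint.eq_top]; trivial
    obtain ⟨x, hx, y, hy, hxy⟩ := Submodule.mem_sup.mp hv
    exact ⟨⟨x, hx⟩, ⟨y, hy⟩, hxy.symm⟩
  -- extension of an automorphism of a generalized eigenspace by the identity
  have hext : ∀ (i : Fin r) (h : (Vg i) ≃ₗ[K] (Vg i)),
      (∀ a b : Vg i, B ↑(h a) ↑(h b) = B ↑a ↑b) →
      (∀ a : Vg i, (↑(h ((P.restrict (hPVg i)) a)) : V) = P ↑(h a)) →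
      ∃ g : V ≃ₗ[K] V, (∀ u v : V, B (g u) (g v) = B u v) ∧ (∀ v : V, g (P v) = P (g v)) ∧
        (∀ x : Vg i, g ↑x = ↑(h x)) ∧ (∀ y ∈ U' i, g y = y) := by
    intro i h hB hP'
    set e := Submodule.prodEquivOfIsCompl (Vg i) (U' i) (hcompl i) with hedef
    set g : V ≃ₗ[K] V := (e.symm.trans ((h.prodCongr (LinearEquiv.refl K (U' i))).trans e)) with hgdef
    have he : ∀ (x : Vg i) (y : U' i), e (x, y) = ↑x + ↑y := by
      intro x y; simp [hedef, Submodule.coe_prodEquivOfIsCompl]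
    have key : ∀ (x : Vg i) (y : U' i), g (↑x + ↑y) = ↑(h x) + ↑y := by
      intro x y
      have hsymm : e.symm (↑x + ↑y) = (x, y) := by
        rw [LinearEquiv.symm_apply_eq]; exact (he x y).symm
      show e ((h.prodCongr (LinearEquiv.refl K (U' i))) (e.symm (↑x + ↑y))) = _
      rw [hsymm]
      have h2 : (h.prodCongr (LinearEquiv.refl K (U' i))) (x, y) = (h x, y) := rfl
      rw [h2, he]
    have gx : ∀ x : Vg i, g ↑x = ↑(h x) := by
      intro x
      have := key x 0
      simpa using this
    have gy : ∀ y : U' i, g ↑y = ↑y := by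
      intro y
      have := key 0 y
      simpa using this
    refine ⟨g, ?_, ?_, gx, fun y hy => gy ⟨y, hy⟩⟩
    · intro u v
      obtain ⟨x, y, rfl⟩ := hdecomp i u
      obtain ⟨x', y', rfl⟩ := hdecomp i v
      rw [key, key]
      have c1 : B ↑(h x) ↑y' = 0 := hU'orth i _ (h x).2 _ y'.2
      have c2 : B (↑y : V) ↑(h x') = 0 := hU'orth' i _ (h x').2 _ y.2
      have c3 : B (↑x : V) ↑y' = 0 := hU'orth i _ x.2 _ y'.2
      have c4 : B (↑y : V) ↑x' = 0 := hU'orth' i _ x'.2 _ y.2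
      simp only [map_add, LinearMap.add_apply, c1, c2, c3, c4, hB x x', add_zero, zero_add]
    · intro v
      obtain ⟨x, y, rfl⟩ := hdecomp i v
      have step1 : P ((↑x : V) + ↑y) = ↑((P.restrict (hPVg i)) x) + ↑(⟨P ↑y, hU'P i ↑y y.2⟩ : U' i) := by
        rw [map_add]; rfl
      rw [step1, key, hP', key, map_add]
  -- conversion between the two indexed sup forms
  have hbiuniv : ∀ (T : Fin r → Submodule K V), (⨆ j ∈ Finset.univ, T j) = ⨆ j, T j := by
    intro T
    simp
  constructor
  · intro hInv
    constructor
    · refine le_antisymm ?_ (iSup_le fun i => inf_le_left)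
      have claim : ∀ s : Finset (Fin r), ∀ w ∈ W, w ∈ (⨆ j ∈ s, Vg j) →
          w ∈ ⨆ j ∈ s, (W ⊓ Vg j) := by
        intro s
        induction s using Finset.induction_on with
        | empty =>
          intro w hw hws
          have hw0 : w = 0 := by simpa using hws
          rw [hw0]
          exact zero_mem _
        | @insert i s his IH =>
          intro w hw hws
          rw [Finset.iSup_insert] at hws
          obtain ⟨x, hx, y, hy, hxy⟩ := Submodule.mem_sup.mp hws
          obtain ⟨g, hg1, hg2, hg3, hg4⟩ := hext i (LinearEquiv.neg K)
            (by intro a b; simp) (by intro a; simp)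
          have hWg := hInv g hg1 hg2
          have hyU : y ∈ U' i :=
            (iSup₂_le fun j hj => hU'le i j (fun hji => his (hji ▸ hj))) hy
          have hgw : g w ∈ W := by
            rw [← hWg]; exact Submodule.mem_map_of_mem hw
          have hgweq : g w = -x + y := by
            rw [← hxy, map_add, hg4 y hyU]
            have := hg3 ⟨x, hx⟩
            simp only [LinearEquiv.neg_apply] at this
            rw [this]
            simp
          have hxW : x ∈ W := by
            have h2 : w - g w = (2 : K) • x := by
              rw [hgweq, ← hxy]
              rw [two_smul]
              abel
            have h3 : x = (2⁻¹ : K) • (w - g w) := by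
              rw [h2, smul_smul, inv_mul_cancel₀ (two_ne_zero), one_smul]
            rw [h3]
            exact Submodule.smul_mem _ _ (Submodule.sub_mem _ hw hgw)
          have hyW : y ∈ W := by
            have h4 : y = w - x := by rw [← hxy]; abel
            rw [h4]
            exact Submodule.sub_mem _ hw hxW
          have hymem := IH y hyW hy
          rw [Finset.iSup_insert, ← hxy]
          exact Submodule.add_mem _ (Submodule.mem_sup_left (⟨hxW, hx⟩ : x ∈ W ⊓ Vg i))
            (Submodule.mem_sup_right hymem)
      intro w hw
      have hw2 : w ∈ ⨆ j ∈ Finset.univ, Vg j := htopbi trivial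
      have := claim Finset.univ w hw hw2
      rwa [hbiuniv] at this
    · intro i g' hB' hP'
      obtain ⟨g, hg1, hg2, hg3, hg4⟩ := hext i g' (fun a b => hB' a b)
        (by intro a; rw [hP' a]; rfl)
      have hWg := hInv g hg1 hg2
      have hmemW : ∀ z : V, z ∈ W ↔ g z ∈ W := by
        intro z
        constructor
        · intro hz; rw [← hWg]; exact Submodule.mem_map_of_mem hz
        · intro hz
          rw [← hWg] at hz
          obtain ⟨z', hz', hzz⟩ := hz
          have : z' = z := g.injective hzz
          rwa [← this]
      apply le_antisymm
      · rintro _ ⟨a, ha, rfl⟩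
        have haW : (↑a : V) ∈ W := (Submodule.mem_comap.mp ha).1
        refine Submodule.mem_comap.mpr ⟨?_, (g' a).2⟩
        show (↑(g' a) : V) ∈ W
        rw [← hg3 a]
        exact (hmemW ↑a).mp haW
      · intro a ha
        have haW : (↑a : V) ∈ W := (Submodule.mem_comap.mp ha).1
        refine Submodule.mem_map.mpr ⟨g'.symm a, ?_, by simp⟩
        refine Submodule.mem_comap.mpr ⟨?_, (g'.symm a).2⟩
        show (↑(g'.symm a) : V) ∈ W
        apply (hmemW ↑(g'.symm a)).mpr
        rw [hg3 (g'.symm a)]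
        simpa using haW
  · rintro ⟨hWsum, hpieces⟩
    intro g hgB hgP
    have hgP' : ∀ v : V, g.symm (P v) = P (g.symm v) := by
      intro v
      calc g.symm (P v) = g.symm (P (g (g.symm v))) := by rw [g.apply_symm_apply]
        _ = g.symm (g (P (g.symm v))) := by rw [hgP]
        _ = P (g.symm v) := g.symm_apply_apply _
    have hgVg : ∀ i, ∀ x ∈ Vg i, g x ∈ Vg i := by
      intro i x hx
      refine (hVgmem i (g x)).mpr ?_
      rw [← aux_aeval_comm P g hgP (Q i) x, (hVgmem i x).mp hx, map_zero]
    have hgVg' : ∀ i, ∀ x ∈ Vg i, g.symm x ∈ Vg i := by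
      intro i x hx
      refine (hVgmem i (g.symm x)).mpr ?_
      rw [← aux_aeval_comm P g.symm hgP' (Q i) x, (hVgmem i x).mp hx, map_zero]
    have key : ∀ i, Submodule.map (g : V →ₗ[K] V) (W ⊓ Vg i) = W ⊓ Vg i := by
      intro i
      set h : (Vg i) ≃ₗ[K] (Vg i) := LinearEquiv.ofLinear
        ((g : V →ₗ[K] V).restrict (hgVg i)) ((g.symm : V →ₗ[K] V).restrict (hgVg' i))
        (by ext a; simp [LinearMap.restrict_apply]) (by ext a; simp [LinearMap.restrict_apply])
        with hhdef
      have hcoe : ∀ a : Vg i, (↑(h a) : V) = g ↑a := fun a => rfl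
      have hBh : ∀ u v : Vg i, (B.domRestrict₁₂ (Vg i) (Vg i)) (h u) (h v)
          = (B.domRestrict₁₂ (Vg i) (Vg i)) u v := by
        intro u v
        show B ↑(h u) ↑(h v) = B ↑u ↑v
        rw [hcoe, hcoe]
        exact hgB ↑u ↑v
      have hPh : ∀ v : Vg i, h ((P.restrict (hPVg i)) v) = (P.restrict (hPVg i)) (h v) := by
        intro v
        apply Subtype.ext
        show (↑(h ((P.restrict (hPVg i)) v)) : V) = ↑((P.restrict (hPVg i)) (h v))
        rw [hcoe]
        show g (P ↑v) = P ↑(h v)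
        rw [hcoe]
        exact hgP ↑v
      have hS := hpieces i h hBh hPh
      apply le_antisymm
      · rintro _ ⟨x, hx, rfl⟩
        have hxS : (⟨x, hx.2⟩ : Vg i) ∈ (W ⊓ Vg i).comap (Vg i).subtype := hx
        have hmapped : h ⟨x, hx.2⟩ ∈ (W ⊓ Vg i).comap (Vg i).subtype := by
          rw [← hS]
          exact Submodule.mem_map_of_mem hxS
        exact hmapped
      · intro x hx
        have hxS : (⟨x, hx.2⟩ : Vg i) ∈ (W ⊓ Vg i).comap (Vg i).subtype := hx
        rw [← hS] at hxS
        obtain ⟨b, hb, hba⟩ := Submodule.mem_map.mp hxS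
        refine Submodule.mem_map.mpr ⟨↑b, hb, ?_⟩
        exact congrArg (Subtype.val) hba
    conv_lhs => rw [hWsum]
    rw [Submodule.map_iSup]
    conv_rhs => rw [hWsum]
    exact iSup_congr key
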